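/- For every f ∈ (0,1), (2/π)·∫₀^∞ ln((1−f) + f x²)/(1 + x²) dx = 2·ln(√f + √(1−f)). Consequently, the function G(f) = 2·ln(√f + √(1−f)) satisfies G(f) = G(1−f) > 0 for f ∈ (0,1), and its unique maximizer on (0,1) is f* = 1/2 with maximal value G(1/2) = ln 2. -/

import Mathlib

set_option maxHeartbeats 1000000

open Real MeasureTheory Set Filter

lemma contOn (a b : ℝ) (ha : 0 < a) (hb : 0 ≤ b) :
    ContinuousOn (fun x : ℝ => Real.log (a + b * x^2) / (1 + x^2)) (Ici 0) := by
  apply ContinuousOn.div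
  · apply ContinuousOn.log (by fun_prop)
    intro x hx
    have : 0 ≤ b * x^2 := by positivity
    linarith
  · fun_prop
  · intro x hx; positivity

lemma integrableLog (a b : ℝ) (ha : 0 < a) (hb : 0 < b) :
    IntegrableOn (fun x : ℝ => Real.log (a + b * x^2) / (1 + x^2)) (Ioi 0) := by
  have hcont := contOn a b ha hb.le
  rw [show Ioi (0:ℝ) = Ioc 0 1 ∪ Ioi 1 by rw [Ioc_union_Ioi_eq_Ioi]; norm_num]
  apply IntegrableOn.union
  · exact ((hcont.mono (Icc_subset_Ici_self)).integrableOn_Icc).mono_set Ioc_subset_Icc_self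
  · -- on Ioi 1
    set C := |Real.log (a + b)| with hC
    have hmeas : AEStronglyMeasurable (fun x : ℝ => Real.log (a + b * x^2) / (1 + x^2))
        (volume.restrict (Ioi 1)) :=
      (hcont.mono (fun x hx => le_trans zero_le_one hx.out.le)).aestronglyMeasurable measurableSet_Ioi
    have hgint : IntegrableOn (fun x : ℝ => C * x ^ ((-2 : ℝ)) + 4 * x ^ ((-3/2 : ℝ))) (Ioi 1) := by
      apply Integrable.add
      · exact ((integrableOn_Ioi_rpow_of_lt (by norm_num) one_pos).const_mul C)
      · exact ((integrableOn_Ioi_rpow_of_lt (by norm_num) one_pos).const_mul 4)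
    apply Integrable.mono' hgint hmeas
    rw [ae_restrict_iff' measurableSet_Ioi]
    filter_upwards with x hx
    have hx1 : (1:ℝ) < x := hx
    have hx0 : (0:ℝ) < x := by linarith
    have hy0 : 0 < a + b * x^2 := by nlinarith
    have hab : a + b ≤ a + b * x^2 := by nlinarith [sq_nonneg (x-1)]
    have hyu : a + b * x^2 ≤ (a + b) * x^2 := by nlinarith
    have hlogx : 0 ≤ Real.log x := Real.log_nonneg hx1.le
    have hsq : Real.log x ≤ 2 * Real.sqrt x := by
      have h1 : Real.log (Real.sqrt x) ≤ Real.sqrt x - 1 :=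
        Real.log_le_sub_one_of_pos (Real.sqrt_pos.mpr hx0)
      have h2 : Real.log (Real.sqrt x) = Real.log x / 2 := Real.log_sqrt hx0.le
      linarith [Real.sqrt_nonneg x]
    have hnum : |Real.log (a + b * x^2)| ≤ C + 4 * Real.sqrt x := by
      rw [abs_le]
      constructor
      · have h3 : Real.log (a+b) ≤ Real.log (a + b * x^2) := Real.log_le_log (by positivity) hab
        have := neg_abs_le (Real.log (a+b))
        nlinarith [Real.sqrt_nonneg x]
      · have h4 : Real.log (a + b * x^2) ≤ Real.log ((a+b) * x^2) := Real.log_le_log hy0 hyu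
        have h5 : Real.log ((a+b)*x^2) = Real.log (a+b) + 2 * Real.log x := by
          rw [Real.log_mul (by positivity) (by positivity), Real.log_pow]; push_cast; ring
        have := le_abs_self (Real.log (a+b))
        nlinarith [Real.sqrt_nonneg x]
    have e1 : x ^ ((-2:ℝ)) = (x^2)⁻¹ := by
      rw [show ((-2:ℝ)) = -(2:ℕ) by norm_num, Real.rpow_neg hx0.le, Real.rpow_natCast]
    have e2 : x ^ ((-3/2:ℝ)) = Real.sqrt x / x^2 := by
      rw [show ((-3/2:ℝ)) = 1/2 + -(2:ℕ) by norm_num, Real.rpow_add hx0,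
        Real.rpow_neg hx0.le, Real.rpow_natCast, ← Real.sqrt_eq_rpow]
      ring
    rw [norm_div, Real.norm_eq_abs, Real.norm_eq_abs, abs_of_pos (by positivity : (0:ℝ) < 1 + x^2),
      e1, e2]
    have hden : x^2 ≤ 1 + x^2 := by linarith
    calc |Real.log (a + b*x^2)| / (1+x^2) ≤ (C + 4 * Real.sqrt x) / x^2 := by
          apply div_le_div₀ (by positivity) hnum (by positivity) hden
      _ = C * (x^2)⁻¹ + 4 * (Real.sqrt x / x^2) := by ring


lemma deriv_int (t : ℝ) (ht : 0 < t) :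
    ∫ x in Ioi (0:ℝ), 2 * t / ((t^2 + x^2) * (1 + x^2)) = π / (1 + t) := by
  have harctanT : Tendsto (fun x : ℝ => Real.arctan (x / t)) atTop (nhds (π/2)) := by
    apply (tendsto_nhds_of_tendsto_nhdsWithin tendsto_arctan_atTop).comp
    exact tendsto_id.atTop_div_const ht
  have harctan : Tendsto Real.arctan atTop (nhds (π/2)) :=
    tendsto_nhds_of_tendsto_nhdsWithin tendsto_arctan_atTop
  have hdint : IntegrableOn (fun x : ℝ => 2 * t / ((t^2 + x^2) * (1 + x^2))) (Ioi 0) := by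
    apply Integrable.mono' ((integrable_inv_one_add_sq.const_mul (2/t)).integrableOn)
    · apply Continuous.aestronglyMeasurable
      apply Continuous.div continuous_const (by fun_prop)
      intro x; positivity
    · filter_upwards with x
      rw [Real.norm_eq_abs, abs_of_pos (by positivity)]
      rw [div_le_iff₀ (by positivity)]
      have h1 : t^2 ≤ t^2 + x^2 := by nlinarith
      have : 2/t * (1+x^2)⁻¹ * ((t^2+x^2) * (1+x^2)) = 2/t * (t^2 + x^2) := by
        field_simp
      rw [this]
      rw [div_mul_eq_mul_div, le_div_iff₀ ht]
      nlinarith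
  rcases eq_or_ne t 1 with rfl | hne
  · -- t = 1 : antiderivative x/(1+x²) + arctan x
    have key : ∫ x in Ioi (0:ℝ), 2 * 1 / ((1^2 + x^2) * (1 + x^2)) = (0 + π/2) - (0/(1+0^2) + Real.arctan 0) := by
      apply integral_Ioi_of_hasDerivAt_of_tendsto' (f := fun x => x/(1+x^2) + Real.arctan x)
      · intro x _
        have h1 : HasDerivAt (fun x : ℝ => x/(1+x^2)) ((1*(1+x^2) - x*(2*x))/(1+x^2)^2) x := by
          have hd : HasDerivAt (fun x : ℝ => 1 + x^2) (2*x) x := by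
            simpa using ((hasDerivAt_pow 2 x).const_add 1)
          exact (hasDerivAt_id x).div hd (by positivity)
        have := h1.add (Real.hasDerivAt_arctan x)
        refine this.congr_deriv ?_
        field_simp
        ring
      · simpa using hdint
      · have h0 : Tendsto (fun x : ℝ => x/(1+x^2)) atTop (nhds 0) := by
          apply squeeze_zero' (g := fun x : ℝ => 1/x)
          · filter_upwards [eventually_gt_atTop 0] with x hx
            positivity
          · filter_upwards [eventually_gt_atTop 0] with x hx
            rw [div_le_div_iff₀ (by positivity) hx]
            nlinarith
          · simpa [one_div] using (tendsto_inv_atTop_zero : Tendsto (fun x:ℝ => x⁻¹) atTop (nhds 0))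
        exact h0.add harctan
    rw [show ((1:ℝ)+1) = 2 by norm_num]
    simpa using key
  · -- t ≠ 1
    have ht2 : 1 - t^2 ≠ 0 := by
      intro h
      have : t = 1 := by nlinarith
      exact hne this
    have key : ∫ x in Ioi (0:ℝ), 2 * t / ((t^2 + x^2) * (1 + x^2))
        = (2/(1-t^2)) * (π/2 - t * (π/2)) - (2/(1-t^2)) * (Real.arctan (0/t) - t * Real.arctan 0) := by
      apply integral_Ioi_of_hasDerivAt_of_tendsto'
        (f := fun x => (2/(1-t^2)) * (Real.arctan (x/t) - t * Real.arctan x))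
      · intro x _
        have h1 : HasDerivAt (fun x : ℝ => Real.arctan (x/t)) ((1/(1+(x/t)^2)) * (1/t)) x := by
          exact (Real.hasDerivAt_arctan (x/t)).comp x ((hasDerivAt_id x).div_const t)
        have h2 := (h1.sub ((Real.hasDerivAt_arctan x).const_mul t)).const_mul (2/(1-t^2))
        refine h2.congr_deriv ?_
        have h3 : 1 + (x/t)^2 = (t^2 + x^2)/t^2 := by field_simp
        rw [h3]
        field_simp
        ring
      · exact hdint
      · apply Tendsto.const_mul
        exact harctanT.sub (harctan.const_mul t)
    rw [key]
    simp [Real.arctan_zero]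
    field_simp
    ring


noncomputable def J (t : ℝ) : ℝ := ∫ x in Ioi (0:ℝ), Real.log (t^2 + x^2) / (1 + x^2)

lemma hasDerivJ (t : ℝ) (ht : 0 < t) : HasDerivAt J (π / (1 + t)) t := by
  have hmain := hasDerivAt_integral_of_dominated_loc_of_deriv_le
    (F := fun s (x : ℝ) => Real.log (s^2 + x^2) / (1 + x^2))
    (F' := fun s (x : ℝ) => 2 * s / ((s^2 + x^2) * (1 + x^2)))
    (x₀ := t) (s := Metric.ball t (t/2))
    (bound := fun x : ℝ => (12/t) * (1 + x^2)⁻¹)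
    (μ := volume.restrict (Ioi 0))
    (Metric.ball_mem_nhds t (by positivity))
    (by
      filter_upwards [eventually_gt_nhds ht] with s hs
      have : AEStronglyMeasurable (fun x : ℝ => Real.log (s^2 + 1 * x^2) / (1 + x^2))
          (volume.restrict (Ioi 0)) :=
        ((contOn (s^2) 1 (by positivity) one_pos.le).mono
          (Ioi_subset_Ici le_rfl)).aestronglyMeasurable measurableSet_Ioi
      simpa using this)
    (by simpa [IntegrableOn] using integrableLog (t^2) 1 (by positivity) one_pos)
    (by
      apply Continuous.aestronglyMeasurable
      apply Continuous.div continuous_const (by fun_prop)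
      intro x
      positivity)
    (by
      filter_upwards with x
      intro s hs
      rw [Metric.mem_ball, Real.dist_eq, abs_lt] at hs
      have hs1 : t/2 < s := by linarith [hs.1]
      have hs2 : s < 3*t/2 := by linarith [hs.2]
      have hs0 : 0 < s := by linarith
      rw [Real.norm_eq_abs, abs_of_pos (by positivity)]
      calc 2 * s / ((s^2 + x^2) * (1 + x^2)) ≤ 3*t / ((t^2/4) * (1 + x^2)) := by
            apply div_le_div₀ (by positivity) (by linarith) (by positivity)
            have : t^2/4 ≤ s^2 := by nlinarith
            nlinarith [sq_nonneg x]
        _ = (12/t) * (1 + x^2)⁻¹ := by field_simp; ring)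
    (((integrable_inv_one_add_sq.const_mul (12/t)).integrableOn))
    (by
      filter_upwards with x
      intro s hs
      have hd : HasDerivAt (fun s : ℝ => Real.log (s^2 + x^2)) (2*s / (s^2 + x^2)) s := by
        rw [Metric.mem_ball, Real.dist_eq, abs_lt] at hs
        have hs0 : 0 < s := by linarith [hs.1]
        have h1 : HasDerivAt (fun s : ℝ => s^2 + x^2) (2*s) s := by
          simpa using ((hasDerivAt_pow 2 s).add_const (x^2))
        exact (h1.log (by positivity)).congr_deriv (by ring)
      have := hd.div_const (1 + x^2)
      refine this.congr_deriv ?_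
      rw [div_div])
  have h2 := hmain.2
  rw [deriv_int t ht] at h2
  exact h2


lemma intIoi : ∫ x in Ioi (0:ℝ), (1 + x^2)⁻¹ = π/2 := by
  simpa using (integral_Ioi_inv_one_add_sq (i := 0))

lemma J_split (t : ℝ) (ht : 0 < t) :
    J t = π * Real.log t + ∫ x in Ioi (0:ℝ), Real.log (1 + (1/t^2) * x^2) / (1 + x^2) := by
  have hint1 : IntegrableOn (fun x : ℝ => Real.log (t^2) * (1 + x^2)⁻¹) (Ioi 0) :=
    (integrable_inv_one_add_sq.const_mul _).integrableOn
  have hint2 : IntegrableOn (fun x : ℝ => Real.log (1 + (1/t^2) * x^2) / (1 + x^2)) (Ioi 0) :=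
    integrableLog 1 (1/t^2) one_pos (by positivity)
  have heq : ∀ x ∈ Ioi (0:ℝ),
      Real.log (t^2 + x^2) / (1 + x^2)
        = Real.log (t^2) * (1 + x^2)⁻¹ + Real.log (1 + (1/t^2) * x^2) / (1 + x^2) := by
    intro x hx
    have h1 : t^2 + x^2 = t^2 * (1 + (1/t^2) * x^2) := by field_simp
    rw [h1, Real.log_mul (by positivity) (by positivity)]
    ring
  rw [J, setIntegral_congr_fun measurableSet_Ioi heq, integral_add hint1 hint2,
    integral_const_mul, intIoi]
  rw [show t^2 = t^2 by rfl]
  have : Real.log (t^2) = 2 * Real.log t := by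
    rw [Real.log_pow]; push_cast; ring
  rw [this]
  ring

lemma J_eq (t : ℝ) (ht : 0 < t) : J t = π * Real.log (1 + t) := by
  set E : ℝ → ℝ := fun s => J s - π * Real.log (1 + s) with hE
  have hEderiv : ∀ s : ℝ, 0 < s → HasDerivAt E 0 s := by
    intro s hs
    have h1 : HasDerivAt (fun s : ℝ => Real.log (1 + s)) (1/(1+s)) s := by
      have := ((hasDerivAt_id s).const_add 1).log (by positivity)
      simpa using this
    have h2 := (hasDerivJ s hs).sub (h1.const_mul π)
    refine h2.congr_deriv ?_
    field_simp
    ring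
  have hEconst : ∀ a b : ℝ, 0 < a → a ≤ b → E b = E a := by
    intro a b ha hab
    have := constant_of_has_deriv_right_zero
      (f := E) (a := a) (b := b)
      (fun x hx => (hEderiv x (lt_of_lt_of_le ha hx.1)).continuousAt.continuousWithinAt)
      (fun x hx => (hEderiv x (lt_of_lt_of_le ha hx.1)).hasDerivWithinAt)
    exact this b (right_mem_Icc.mpr hab)
  have hlim : Tendsto (fun n : ℕ => E ((n:ℝ)+1)) atTop (nhds 0) := by
    set D : ℝ → ℝ := fun t => ∫ x in Ioi (0:ℝ), Real.log (1 + (1/t^2) * x^2) / (1 + x^2) with hD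
    have hEn : ∀ n : ℕ, E ((n:ℝ)+1)
        = π * Real.log (((n:ℝ)+1)/((n:ℝ)+2)) + D ((n:ℝ)+1) := by
      intro n
      have hpos : (0:ℝ) < (n:ℝ)+1 := by positivity
      have := J_split ((n:ℝ)+1) hpos
      have hlog : Real.log (1 + ((n:ℝ)+1)) = Real.log ((n:ℝ)+2) := by ring_nf
      have hdiv : Real.log (((n:ℝ)+1)/((n:ℝ)+2))
          = Real.log ((n:ℝ)+1) - Real.log ((n:ℝ)+2) :=
        Real.log_div (by positivity) (by positivity)
      simp only [hE]
      rw [this, hlog, hdiv]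
      ring
    have h1 : Tendsto (fun n : ℕ => Real.log (((n:ℝ)+1)/((n:ℝ)+2))) atTop (nhds 0) := by
      have hr : Tendsto (fun n : ℕ => ((n:ℝ)+1)/((n:ℝ)+2)) atTop (nhds 1) := by
        have h2 : Tendsto (fun n : ℕ => ((n:ℝ)+2)) atTop atTop :=
          tendsto_atTop_add_const_right atTop 2 tendsto_natCast_atTop_atTop
        have h3 : Tendsto (fun n : ℕ => ((n:ℝ)+2)⁻¹) atTop (nhds 0) := h2.inv_tendsto_atTop
        have h4 : Tendsto (fun n : ℕ => 1 - ((n:ℝ)+2)⁻¹) atTop (nhds (1 - 0)) :=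
          tendsto_const_nhds.sub h3
        rw [sub_zero] at h4
        apply h4.congr
        intro n
        have : ((n:ℝ)+2) ≠ 0 := by positivity
        field_simp
        ring
      have := (Real.continuousAt_log (by norm_num : (1:ℝ) ≠ 0)).tendsto.comp hr
      simpa [Function.comp_def] using this
    have hDlim : Tendsto (fun n : ℕ => D ((n:ℝ)+1)) atTop (nhds 0) := by
      have hc : ∀ n : ℕ, (0:ℝ) < 1/(((n:ℝ)+1))^2 := by intro n; positivity
      have key := tendsto_integral_of_dominated_convergence
        (μ := volume.restrict (Ioi (0:ℝ)))
        (F := fun (n : ℕ) (x : ℝ) => Real.log (1 + 1/(((n:ℝ)+1))^2 * x^2) / (1 + x^2))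
        (f := fun _ : ℝ => (0:ℝ))
        (bound := fun x : ℝ => Real.log (1 + 1 * x^2) / (1 + x^2))
        ?_ ?_ ?_ ?_
      · rw [show (0:ℝ) = ∫ _x in Ioi (0:ℝ), (0:ℝ) by simp]
        exact key
      · intro n
        exact ((contOn 1 (1/(((n:ℝ)+1))^2) one_pos (hc n).le).mono
          (Ioi_subset_Ici le_rfl)).aestronglyMeasurable measurableSet_Ioi
      · simpa [IntegrableOn] using integrableLog 1 1 one_pos one_pos
      · intro n
        filter_upwards with x
        have hb : 1/(((n:ℝ)+1))^2 ≤ 1 := by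
          rw [div_le_one (by positivity)]
          nlinarith [Nat.cast_nonneg (α := ℝ) n]
        have h5 : (0:ℝ) < 1 + 1/(((n:ℝ)+1))^2 * x^2 := by positivity
        have h6 : (0:ℝ) ≤ Real.log (1 + 1/(((n:ℝ)+1))^2 * x^2) :=
          Real.log_nonneg (by nlinarith [sq_nonneg x, (hc n).le, mul_nonneg (hc n).le (sq_nonneg x)])
        rw [Real.norm_eq_abs, abs_of_nonneg (div_nonneg h6 (by positivity))]
        have hlog : Real.log (1 + 1/(((n:ℝ)+1))^2 * x^2) ≤ Real.log (1 + 1 * x^2) :=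
          Real.log_le_log h5 (by nlinarith [sq_nonneg x])
        exact (div_le_div_iff_of_pos_right (by positivity)).mpr hlog
      · filter_upwards with x
        have hc0 : Tendsto (fun n : ℕ => 1/(((n:ℝ)+1))^2) atTop (nhds 0) := by
          have h := tendsto_one_div_add_atTop_nhds_zero_nat (𝕜 := ℝ)
          have h2 := h.mul h
          rw [mul_zero] at h2
          apply h2.congr
          intro n
          have : ((n:ℝ)+1) ≠ 0 := by positivity
          field_simp
        have h6 : Tendsto (fun n : ℕ => 1 + 1/(((n:ℝ)+1))^2 * x^2) atTop (nhds 1) := by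
          have := (hc0.mul_const (x^2)).const_add 1
          simpa using this
        have h7 := (Real.continuousAt_log (by norm_num : (1:ℝ) ≠ 0)).tendsto.comp h6
        rw [Real.log_one] at h7
        have := h7.div_const (1 + x^2)
        simpa using this
    have := (h1.const_mul π).add hDlim
    rw [mul_zero, add_zero] at this
    exact this.congr (fun n => (hEn n).symm)
  have hconst : ∀ n : ℕ, E ((n:ℝ)+1) = E t := by
    intro n
    rcases le_total t ((n:ℝ)+1) with h | h
    · exact hEconst t _ ht h
    · exact (hEconst _ t (by positivity) h).symm
  rw [show (fun n : ℕ => E ((n:ℝ)+1)) = (fun _ : ℕ => E t) from funext hconst] at hlim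
  have := tendsto_nhds_unique hlim tendsto_const_nhds
  have hEt : E t = 0 := this.symm ▸ rfl
  have : J t - π * Real.log (1+t) = 0 := hEt
  linarith

lemma main_integral (f : ℝ) (hf : f ∈ Set.Ioo (0:ℝ) 1) :
    (2 / Real.pi) * ∫ x in Set.Ioi (0 : ℝ), Real.log ((1 - f) + f * x ^ 2) / (1 + x ^ 2)
      = 2 * Real.log (Real.sqrt f + Real.sqrt (1 - f)) := by
  obtain ⟨h0, h1⟩ := hf
  have h1f : (0:ℝ) < 1 - f := by linarith
  set t : ℝ := Real.sqrt (1-f) / Real.sqrt f with htdef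
  have hsf : 0 < Real.sqrt f := Real.sqrt_pos.mpr h0
  have hsg : 0 < Real.sqrt (1-f) := Real.sqrt_pos.mpr h1f
  have ht : 0 < t := by positivity
  have ht2 : f * t^2 = 1 - f := by
    rw [htdef, div_pow, Real.sq_sqrt h1f.le, Real.sq_sqrt h0.le]
    field_simp
  have heq : ∀ x ∈ Ioi (0:ℝ),
      Real.log ((1 - f) + f * x ^ 2) / (1 + x ^ 2)
        = Real.log f * (1 + x^2)⁻¹ + Real.log (t^2 + x^2) / (1 + x^2) := by
    intro x hx
    have hrw : (1 - f) + f * x ^ 2 = f * (t^2 + x^2) := by rw [← ht2]; ring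
    rw [hrw, Real.log_mul (ne_of_gt h0) (by positivity)]
    ring
  have hint1 : IntegrableOn (fun x : ℝ => Real.log f * (1 + x^2)⁻¹) (Ioi 0) :=
    (integrable_inv_one_add_sq.const_mul _).integrableOn
  have hint2 : IntegrableOn (fun x : ℝ => Real.log (t^2 + x^2) / (1 + x^2)) (Ioi 0) := by
    simpa using integrableLog (t^2) 1 (by positivity) one_pos
  rw [setIntegral_congr_fun measurableSet_Ioi heq, integral_add hint1 hint2,
    integral_const_mul, intIoi]
  have hJ : (∫ x in Ioi (0:ℝ), Real.log (t^2 + x^2) / (1 + x^2)) = π * Real.log (1+t) :=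
    J_eq t ht
  rw [hJ]
  have hπ : (π : ℝ) ≠ 0 := Real.pi_ne_zero
  have hlog1t : Real.log (1 + t) = Real.log (Real.sqrt f + Real.sqrt (1-f)) - Real.log f / 2 := by
    have : 1 + t = (Real.sqrt f + Real.sqrt (1-f)) / Real.sqrt f := by
      rw [htdef]; field_simp
    rw [this, Real.log_div (by positivity) (ne_of_gt hsf), Real.log_sqrt h0.le]
  rw [hlog1t]
  field_simp
  ring

lemma half_sqrt : Real.sqrt (1/2) + Real.sqrt (1 - 1/2) = Real.sqrt 2 := by
  have h2 : Real.sqrt 2 > 0 := Real.sqrt_pos.mpr (by norm_num)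
  have hs : Real.sqrt 2 ^ 2 = 2 := Real.sq_sqrt (by norm_num)
  have : Real.sqrt (1/2) = (Real.sqrt 2)⁻¹ := by
    rw [show (1:ℝ)/2 = 2⁻¹ by norm_num, Real.sqrt_inv]
  rw [show (1:ℝ) - 1/2 = 1/2 by norm_num, this]
  field_simp
  nlinarith

lemma Gpos (f : ℝ) (hf : f ∈ Set.Ioo (0:ℝ) 1) :
    0 < 2 * Real.log (Real.sqrt f + Real.sqrt (1 - f)) := by
  obtain ⟨h0, h1⟩ := hf
  have hs : (1:ℝ) < Real.sqrt f + Real.sqrt (1 - f) := by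
    nlinarith [Real.sq_sqrt h0.le, Real.sq_sqrt (by linarith : (0:ℝ) ≤ 1 - f),
      Real.sqrt_pos.mpr h0, Real.sqrt_pos.mpr (by linarith : (0:ℝ) < 1 - f)]
  have := Real.log_pos hs
  linarith

lemma Ghalf : 2 * Real.log (Real.sqrt (1/2) + Real.sqrt (1 - 1/2)) = Real.log 2 := by
  rw [half_sqrt, Real.log_sqrt (by norm_num)]; ring

lemma Gmax (f : ℝ) (hf : f ∈ Set.Ioo (0:ℝ) 1) (hne : f ≠ 1/2) :
    2 * Real.log (Real.sqrt f + Real.sqrt (1 - f))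
      < 2 * Real.log (Real.sqrt (1/2) + Real.sqrt (1 - 1/2)) := by
  obtain ⟨h0, h1⟩ := hf
  rw [half_sqrt]
  have hlt : Real.sqrt f + Real.sqrt (1 - f) < Real.sqrt 2 := by
    have hm : Real.sqrt f * Real.sqrt (1 - f) = Real.sqrt (f * (1-f)) := (Real.sqrt_mul h0.le _).symm
    have hfl : f * (1 - f) < 1/4 := by
      rcases lt_or_gt_of_ne hne with h | h <;> nlinarith
    have h4 : Real.sqrt (f * (1-f)) < 1/2 := by
      have : Real.sqrt (f*(1-f)) < Real.sqrt (1/4) := Real.sqrt_lt_sqrt (by nlinarith) hfl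
      have h14 : Real.sqrt (1/4) = 1/2 := by
        rw [show (1:ℝ)/4 = (1/2)^2 by norm_num, Real.sqrt_sq (by norm_num)]
      linarith [this, h14 ▸ this]
    nlinarith [Real.sq_sqrt h0.le, Real.sq_sqrt (by linarith : (0:ℝ) ≤ 1 - f),
      Real.sqrt_nonneg f, Real.sqrt_nonneg (1-f), Real.sq_sqrt (by norm_num : (0:ℝ) ≤ 2),
      Real.sqrt_nonneg 2]
  have := Real.log_lt_log (by positivity) hlt
  linarith

/-- for `f ∈ (0,1)`,
`(2/π) ∫₀^∞ log((1-f) + f x²)/(1+x²) dx = 2 log(√f + √(1-f))`;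
consequently `G(f) = 2 log(√f + √(1-f))` satisfies `G(f) = G(1-f) > 0` on `(0,1)`,
and its unique maximizer on `(0,1)` is `f* = 1/2` with `G(1/2) = log 2`. -/
theorem squared_cauchy_growth_rate :
    (∀ f ∈ Set.Ioo (0 : ℝ) 1,
      (2 / Real.pi) * ∫ x in Set.Ioi (0 : ℝ), Real.log ((1 - f) + f * x ^ 2) / (1 + x ^ 2)
        = 2 * Real.log (Real.sqrt f + Real.sqrt (1 - f)))
    ∧ (∀ f ∈ Set.Ioo (0 : ℝ) 1,
        2 * Real.log (Real.sqrt f + Real.sqrt (1 - f))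
          = 2 * Real.log (Real.sqrt (1 - f) + Real.sqrt (1 - (1 - f)))
        ∧ 0 < 2 * Real.log (Real.sqrt f + Real.sqrt (1 - f)))
    ∧ 2 * Real.log (Real.sqrt (1 / 2) + Real.sqrt (1 - 1 / 2)) = Real.log 2
    ∧ (∀ f ∈ Set.Ioo (0 : ℝ) 1, f ≠ 1 / 2 →
        2 * Real.log (Real.sqrt f + Real.sqrt (1 - f))
          < 2 * Real.log (Real.sqrt (1 / 2) + Real.sqrt (1 - 1 / 2))) := by
  refine ⟨fun f hf => main_integral f hf, fun f hf => ⟨?_, Gpos f hf⟩, Ghalf, fun f hf hne => Gmax f hf hne⟩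
  rw [show (1:ℝ) - (1 - f) = f by ring, add_comm]
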